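/- Discrete Gronwall lemma with weakly singular kernel: Let T > 0, N ∈ ℕ, k = T/N, t_n = n·k. If nonnegative reals φ_1,...,φ_N satisfy φ_n ≤ M_0·(1 + t_n^{-1+μ}) + M_1·k·∑_{j=1}^{n-1} t_{n-j}^{-1+ν}·φ_j for all 1 ≤ n ≤ N, where M_0, M_1 ≥ 0 and μ, ν > 0, then there exists a constant M_2 depending only on μ, ν, M_1, T (but not on N, k, or M_0) such that φ_n ≤ M_0·M_2·(1 + t_n^{-1+μ}) for all 1 ≤ n ≤ N. -/

import Mathlib

open Finset

/-- Bernoulli-type step inequality for concave powers. -/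
private lemma rpow_step {p a b : ℝ} (hp : 0 < p) (hp1 : p ≤ 1) (ha : 0 ≤ a) (hab : a ≤ b) :
    p * b ^ (p - 1) * (b - a) ≤ b ^ p - a ^ p := by
  rcases (ha.trans hab).lt_or_eq with hb | hb
  · have hbne : b ≠ 0 := ne_of_gt hb
    have hx0 : 0 ≤ a / b := div_nonneg ha hb.le
    have key : (a / b) ^ p ≤ p * (a / b) + (1 - p) := by
      have h := Real.geom_mean_le_arith_mean2_weighted (w₁ := p) (w₂ := 1 - p)
        (p₁ := a / b) (p₂ := 1) hp.le (by linarith) hx0 zero_le_one (by ring)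
      simpa using h
    have hba : b * (a / b) = a := by field_simp
    have haxp : a ^ p = b ^ p * (a / b) ^ p := by
      rw [← Real.mul_rpow hb.le hx0, hba]
    have hbp : b ^ (p - 1) = b ^ p / b := by rw [Real.rpow_sub hb, Real.rpow_one]
    have hbpnn : (0:ℝ) ≤ b ^ p := Real.rpow_nonneg hb.le p
    have hmain : b ^ p * (p * (1 - a / b)) ≤ b ^ p * (1 - (a / b) ^ p) :=
      mul_le_mul_of_nonneg_left (by nlinarith) hbpnn
    have heq : p * b ^ (p - 1) * (b - a) = b ^ p * (p * (1 - a / b)) := by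
      rw [hbp]; field_simp
    rw [heq, haxp]
    nlinarith [hmain]
  · have hb0 : b = 0 := hb.symm
    have ha0 : a = 0 := le_antisymm (hab.trans_eq hb0) ha
    simp [hb0, ha0]

/-- Telescoping bound for sums of singular powers. -/
private lemma sum_k_rpow_le {p k : ℝ} (hp : 0 < p) (hk : 0 < k) (L : ℕ) :
    ∑ m ∈ Finset.Icc 1 L, k * ((m : ℝ) * k) ^ (p - 1) ≤ (1 / p + 1) * ((L : ℝ) * k) ^ p := by
  have hLk : (0:ℝ) ≤ (L : ℝ) * k := by positivity
  rcases le_or_gt p 1 with hp1 | hp1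
  · have hstep : ∀ i : ℕ, k * (((i : ℝ) + 1) * k) ^ (p - 1)
        ≤ 1 / p * ((((i : ℝ) + 1) * k) ^ p - ((i : ℝ) * k) ^ p) := by
      intro i
      have h := rpow_step (a := (i : ℝ) * k) (b := ((i : ℝ) + 1) * k) hp hp1
        (by positivity) (by nlinarith)
      have hba : ((i : ℝ) + 1) * k - (i : ℝ) * k = k := by ring
      rw [hba] at h
      have hp' : (0:ℝ) < 1 / p := by positivity
      calc k * (((i : ℝ) + 1) * k) ^ (p - 1)
          = 1 / p * (p * (((i : ℝ) + 1) * k) ^ (p - 1) * k) := by field_simp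
        _ ≤ 1 / p * ((((i : ℝ) + 1) * k) ^ p - ((i : ℝ) * k) ^ p) :=
            mul_le_mul_of_nonneg_left h hp'.le
    calc ∑ m ∈ Finset.Icc 1 L, k * ((m : ℝ) * k) ^ (p - 1)
        = ∑ i ∈ Finset.range L, k * (((i : ℝ) + 1) * k) ^ (p - 1) := by
          rw [← Finset.Ico_add_one_right_eq_Icc, Finset.sum_Ico_eq_sum_range]
          refine Finset.sum_congr (by norm_num) fun i _ => ?_
          push_cast
          ring
      _ ≤ ∑ i ∈ Finset.range L, 1 / p * ((((i : ℝ) + 1) * k) ^ p - ((i : ℝ) * k) ^ p) :=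
          Finset.sum_le_sum fun i _ => hstep i
      _ = 1 / p * (((L : ℝ) * k) ^ p - ((0 : ℝ) * k) ^ p) := by
          rw [← Finset.mul_sum]
          congr 1
          have h := Finset.sum_range_sub (f := fun i : ℕ => ((i : ℝ) * k) ^ p) L
          simpa using h
      _ ≤ (1 / p + 1) * ((L : ℝ) * k) ^ p := by
          have h0 : ((0 : ℝ) * k) ^ p = 0 := by
            rw [zero_mul, Real.zero_rpow hp.ne']
          have h1 : (0:ℝ) ≤ ((L : ℝ) * k) ^ p := Real.rpow_nonneg hLk p
          rw [h0]
          nlinarith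
  · rcases Nat.eq_zero_or_pos L with hL | hL
    · subst hL
      simp [Real.zero_rpow hp.ne']
    · have hLk' : (0:ℝ) < (L : ℝ) * k := by
        have : (0:ℝ) < (L : ℝ) := by exact_mod_cast hL
        positivity
      have hbound : ∀ m ∈ Finset.Icc 1 L, k * ((m : ℝ) * k) ^ (p - 1)
          ≤ k * ((L : ℝ) * k) ^ (p - 1) := by
        intro m hm
        have hm' : (m : ℝ) ≤ (L : ℝ) := by exact_mod_cast (Finset.mem_Icc.1 hm).2
        refine mul_le_mul_of_nonneg_left ?_ hk.le
        exact Real.rpow_le_rpow (by positivity) (by nlinarith) (by linarith)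
      calc ∑ m ∈ Finset.Icc 1 L, k * ((m : ℝ) * k) ^ (p - 1)
          ≤ ∑ _m ∈ Finset.Icc 1 L, k * ((L : ℝ) * k) ^ (p - 1) := Finset.sum_le_sum hbound
        _ = (L : ℝ) * (k * ((L : ℝ) * k) ^ (p - 1)) := by
            rw [Finset.sum_const, Nat.card_Icc]
            simp [nsmul_eq_mul]
        _ = ((L : ℝ) * k) ^ (1 : ℝ) * ((L : ℝ) * k) ^ (p - 1) := by
            rw [Real.rpow_one]; ring
        _ = ((L : ℝ) * k) ^ p := by
            rw [← Real.rpow_add hLk']; norm_num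
        _ ≤ (1 / p + 1) * ((L : ℝ) * k) ^ p := by
            have h1 : (0:ℝ) ≤ ((L : ℝ) * k) ^ p := Real.rpow_nonneg hLk p
            have h2 : (0:ℝ) < 1 / p := by positivity
            nlinarith

/-- Exponentially weighted kernel sum bound. -/
private lemma sum_exp_kernel_le {p k lam δ T : ℝ} (hp : 0 < p) (hk : 0 < k) (hlam : 0 ≤ lam)
    (hδ : 0 < δ) (hT : 0 < T) {n N : ℕ} (hnN : n ≤ N) (hNk : (N : ℝ) * k ≤ T) :
    ∑ m ∈ Finset.Ico 1 n, k * ((m : ℝ) * k) ^ (p - 1) * Real.exp (-(lam * ((m : ℝ) * k)))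
      ≤ (1 / p + 1) * (δ ^ p + T ^ p * Real.exp (-(lam * δ))) := by
  classical
  rw [← Finset.sum_filter_add_sum_filter_not (Finset.Ico 1 n) (fun m : ℕ => (m : ℝ) * k ≤ δ)]
  have hA : ∑ m ∈ (Finset.Ico 1 n).filter (fun m : ℕ => (m : ℝ) * k ≤ δ),
      k * ((m : ℝ) * k) ^ (p - 1) * Real.exp (-(lam * ((m : ℝ) * k)))
      ≤ (1 / p + 1) * δ ^ p := by
    have hsub : (Finset.Ico 1 n).filter (fun m : ℕ => (m : ℝ) * k ≤ δ)
        ⊆ Finset.Icc 1 (Nat.floor (δ / k)) := by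
      intro m hm
      simp only [Finset.mem_filter, Finset.mem_Ico] at hm
      refine Finset.mem_Icc.2 ⟨hm.1.1, Nat.le_floor ?_⟩
      rw [le_div_iff₀ hk]
      exact hm.2
    have hMk : ((Nat.floor (δ / k) : ℝ)) * k ≤ δ := by
      rw [← le_div_iff₀ hk]
      exact Nat.floor_le (by positivity)
    calc ∑ m ∈ (Finset.Ico 1 n).filter (fun m : ℕ => (m : ℝ) * k ≤ δ),
          k * ((m : ℝ) * k) ^ (p - 1) * Real.exp (-(lam * ((m : ℝ) * k)))
        ≤ ∑ m ∈ (Finset.Ico 1 n).filter (fun m : ℕ => (m : ℝ) * k ≤ δ),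
          k * ((m : ℝ) * k) ^ (p - 1) := by
          refine Finset.sum_le_sum fun m _ => ?_
          have h1 : Real.exp (-(lam * ((m : ℝ) * k))) ≤ 1 := by
            rw [Real.exp_le_one_iff]
            have : (0:ℝ) ≤ lam * ((m : ℝ) * k) := by positivity
            linarith
          have h2 : (0:ℝ) ≤ k * ((m : ℝ) * k) ^ (p - 1) := by positivity
          nlinarith
      _ ≤ ∑ m ∈ Finset.Icc 1 (Nat.floor (δ / k)), k * ((m : ℝ) * k) ^ (p - 1) :=
          Finset.sum_le_sum_of_subset_of_nonneg hsub (fun m _ _ => by positivity)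
      _ ≤ (1 / p + 1) * (((Nat.floor (δ / k) : ℝ)) * k) ^ p := sum_k_rpow_le hp hk _
      _ ≤ (1 / p + 1) * δ ^ p := by
          refine mul_le_mul_of_nonneg_left ?_ (by positivity)
          exact Real.rpow_le_rpow (by positivity) hMk hp.le
  have hB : ∑ m ∈ (Finset.Ico 1 n).filter (fun m : ℕ => ¬ ((m : ℝ) * k ≤ δ)),
      k * ((m : ℝ) * k) ^ (p - 1) * Real.exp (-(lam * ((m : ℝ) * k)))
      ≤ (1 / p + 1) * (T ^ p * Real.exp (-(lam * δ))) := by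
    have hsub : (Finset.Ico 1 n).filter (fun m : ℕ => ¬ ((m : ℝ) * k ≤ δ)) ⊆ Finset.Icc 1 N := by
      intro m hm
      simp only [Finset.mem_filter, Finset.mem_Ico] at hm
      exact Finset.mem_Icc.2 ⟨hm.1.1, le_trans (Nat.le_of_lt_succ (Nat.lt_succ_of_lt hm.1.2)) hnN⟩
    calc ∑ m ∈ (Finset.Ico 1 n).filter (fun m : ℕ => ¬ ((m : ℝ) * k ≤ δ)),
          k * ((m : ℝ) * k) ^ (p - 1) * Real.exp (-(lam * ((m : ℝ) * k)))
        ≤ ∑ m ∈ (Finset.Ico 1 n).filter (fun m : ℕ => ¬ ((m : ℝ) * k ≤ δ)),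
          k * ((m : ℝ) * k) ^ (p - 1) * Real.exp (-(lam * δ)) := by
          refine Finset.sum_le_sum fun m hm => ?_
          simp only [Finset.mem_filter, not_le] at hm
          have h1 : Real.exp (-(lam * ((m : ℝ) * k))) ≤ Real.exp (-(lam * δ)) := by
            rw [Real.exp_le_exp]
            have : lam * δ ≤ lam * ((m : ℝ) * k) :=
              mul_le_mul_of_nonneg_left hm.2.le hlam
            linarith
          have h2 : (0:ℝ) ≤ k * ((m : ℝ) * k) ^ (p - 1) := by positivity
          nlinarith
      _ = (∑ m ∈ (Finset.Ico 1 n).filter (fun m : ℕ => ¬ ((m : ℝ) * k ≤ δ)),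
            k * ((m : ℝ) * k) ^ (p - 1)) * Real.exp (-(lam * δ)) := by
          rw [Finset.sum_mul]
      _ ≤ ((1 / p + 1) * T ^ p) * Real.exp (-(lam * δ)) := by
          refine mul_le_mul_of_nonneg_right ?_ (Real.exp_pos _).le
          calc ∑ m ∈ (Finset.Ico 1 n).filter (fun m : ℕ => ¬ ((m : ℝ) * k ≤ δ)),
                k * ((m : ℝ) * k) ^ (p - 1)
              ≤ ∑ m ∈ Finset.Icc 1 N, k * ((m : ℝ) * k) ^ (p - 1) :=
                Finset.sum_le_sum_of_subset_of_nonneg hsub (fun m _ _ => by positivity)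
            _ ≤ (1 / p + 1) * ((N : ℝ) * k) ^ p := sum_k_rpow_le hp hk _
            _ ≤ (1 / p + 1) * T ^ p := by
                refine mul_le_mul_of_nonneg_left ?_ (by positivity)
                exact Real.rpow_le_rpow (by positivity) hNk hp.le
      _ = (1 / p + 1) * (T ^ p * Real.exp (-(lam * δ))) := by ring
  linarith [hA, hB]

/-- Pointwise bound `x^p e^{-λx} ≤ δ^p + T^p e^{-λδ}` for `0 < x ≤ T`. -/
private lemma rpow_mul_exp_le {p x lam δ T : ℝ} (hp : 0 < p) (hx : 0 ≤ x) (hxT : x ≤ T)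
    (hδ : 0 < δ) (hlam : 0 ≤ lam) :
    x ^ p * Real.exp (-(lam * x)) ≤ δ ^ p + T ^ p * Real.exp (-(lam * δ)) := by
  have hT0 : (0:ℝ) ≤ T := le_trans hx hxT
  rcases le_or_gt x δ with h | h
  · have h1 : x ^ p ≤ δ ^ p := Real.rpow_le_rpow hx h hp.le
    have h2 : Real.exp (-(lam * x)) ≤ 1 := by
      rw [Real.exp_le_one_iff]
      have : (0:ℝ) ≤ lam * x := mul_nonneg hlam hx
      linarith
    have h3 : (0:ℝ) ≤ T ^ p * Real.exp (-(lam * δ)) := by positivity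
    nlinarith [Real.rpow_nonneg hx p, (Real.exp_pos (-(lam * x))).le]
  · have h1 : x ^ p ≤ T ^ p := Real.rpow_le_rpow hx hxT hp.le
    have h2 : Real.exp (-(lam * x)) ≤ Real.exp (-(lam * δ)) := by
      rw [Real.exp_le_exp]
      have : lam * δ ≤ lam * x := mul_le_mul_of_nonneg_left h.le hlam
      linarith
    have h4 : (0:ℝ) ≤ δ ^ p := Real.rpow_nonneg hδ.le p
    nlinarith [Real.rpow_nonneg hx p, (Real.exp_pos (-(lam * x))).le,
      Real.rpow_nonneg hT0 p]

set_option maxHeartbeats 1000000 in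
/-- The main kernel estimate. -/
private lemma kernel_bound (T μ ν k lam δ : ℝ) (hT : 0 < T) (hμ : 0 < μ) (hν : 0 < ν)
    (hk : 0 < k) (hδ : 0 < δ) (hlam : 0 ≤ lam) {n N : ℕ} (hn : 1 ≤ n) (hnN : n ≤ N)
    (hNk : (N : ℝ) * k = T) :
    ∑ j ∈ Finset.Ico 1 n,
        k * ((((n - j : ℕ) : ℝ) * k) ^ (ν - 1)
          * Real.exp (-(lam * (((n - j : ℕ) : ℝ) * k)))
          * (1 + ((j : ℝ) * k) ^ (μ - 1)))
      ≤ (((1 + 2 ^ (1 - μ) + T ^ (μ - 1)) * (1 / ν + 1) + (1 / μ + 1) * 2 ^ (1 - ν)) *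
            (δ ^ ν + T ^ ν * Real.exp (-(lam / 4 * δ)))
          + (1 / μ + 1) * T ^ (ν - 1) * (δ ^ μ + T ^ μ * Real.exp (-(lam / 4 * δ))))
        * (1 + ((n : ℝ) * k) ^ (μ - 1)) := by
  classical
  set Hν : ℝ := δ ^ ν + T ^ ν * Real.exp (-(lam / 4 * δ)) with hHν_def
  set Hμ : ℝ := δ ^ μ + T ^ μ * Real.exp (-(lam / 4 * δ)) with hHμ_def
  have htn : (0:ℝ) < (n : ℝ) * k := by
    have : (0:ℝ) < (n : ℝ) := by exact_mod_cast hn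
    positivity
  have htnT : (n : ℝ) * k ≤ T := by
    rw [← hNk]
    have : (n : ℝ) ≤ (N : ℝ) := by exact_mod_cast hnN
    nlinarith
  have hHν0 : (0:ℝ) ≤ Hν := by rw [hHν_def]; positivity
  have hHμ0 : (0:ℝ) ≤ Hμ := by rw [hHμ_def]; positivity
  have hQ0 : (0:ℝ) ≤ ((n : ℝ) * k) ^ (μ - 1) := Real.rpow_nonneg htn.le _
  -- base weighted sum bound (after reindexing)
  have hS1 : ∑ j ∈ Finset.Ico 1 n,
      k * ((((n - j : ℕ) : ℝ) * k) ^ (ν - 1) * Real.exp (-(lam * (((n - j : ℕ) : ℝ) * k))))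
      ≤ (1 / ν + 1) * Hν := by
    have hre : ∑ j ∈ Finset.Ico 1 n,
        k * ((((n - j : ℕ) : ℝ) * k) ^ (ν - 1) * Real.exp (-(lam * (((n - j : ℕ) : ℝ) * k))))
        = ∑ m ∈ Finset.Ico 1 n,
          k * ((m : ℝ) * k) ^ (ν - 1) * Real.exp (-(lam * ((m : ℝ) * k))) := by
      refine Finset.sum_nbij' (fun j => n - j) (fun m => n - m) ?_ ?_ ?_ ?_ ?_
      · intro a ha
        simp only [Finset.mem_Ico] at ha ⊢
        omega
      · intro a ha
        simp only [Finset.mem_Ico] at ha ⊢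
        omega
      · intro a ha
        simp only [Finset.mem_Ico] at ha
        show n - (n - a) = a
        omega
      · intro a ha
        simp only [Finset.mem_Ico] at ha
        show n - (n - a) = a
        omega
      · intro a _
        ring
    rw [hre]
    have h := sum_exp_kernel_le (p := ν) (k := k) (lam := lam) (δ := δ) (T := T)
      hν hk hlam hδ hT hnN hNk.le
    refine h.trans ?_
    refine mul_le_mul_of_nonneg_left ?_ (by positivity)
    rw [hHν_def]
    have hee : Real.exp (-(lam * δ)) ≤ Real.exp (-(lam / 4 * δ)) := by
      rw [Real.exp_le_exp]
      nlinarith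
    have : T ^ ν * Real.exp (-(lam * δ)) ≤ T ^ ν * Real.exp (-(lam / 4 * δ)) :=
      mul_le_mul_of_nonneg_left hee (Real.rpow_nonneg hT.le _)
    linarith
  -- split the sum
  have hsplit : ∑ j ∈ Finset.Ico 1 n,
      k * ((((n - j : ℕ) : ℝ) * k) ^ (ν - 1)
        * Real.exp (-(lam * (((n - j : ℕ) : ℝ) * k))) * (1 + ((j : ℝ) * k) ^ (μ - 1)))
      = (∑ j ∈ Finset.Ico 1 n,
          k * ((((n - j : ℕ) : ℝ) * k) ^ (ν - 1)
            * Real.exp (-(lam * (((n - j : ℕ) : ℝ) * k)))))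
        + ∑ j ∈ Finset.Ico 1 n,
          k * ((((n - j : ℕ) : ℝ) * k) ^ (ν - 1)
            * Real.exp (-(lam * (((n - j : ℕ) : ℝ) * k))) * ((j : ℝ) * k) ^ (μ - 1)) := by
    rw [← Finset.sum_add_distrib]
    exact Finset.sum_congr rfl fun j _ => by ring
  rw [hsplit]
  -- the weighted part, split at n/2
  have hS2 : ∑ j ∈ Finset.Ico 1 n,
      k * ((((n - j : ℕ) : ℝ) * k) ^ (ν - 1)
        * Real.exp (-(lam * (((n - j : ℕ) : ℝ) * k))) * ((j : ℝ) * k) ^ (μ - 1))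
      ≤ (2 ^ (1 - μ) + T ^ (μ - 1)) * (1 + ((n : ℝ) * k) ^ (μ - 1)) * ((1 / ν + 1) * Hν)
        + (1 / μ + 1) * (2 ^ (1 - ν) * Hν * ((n : ℝ) * k) ^ (μ - 1) + T ^ (ν - 1) * Hμ) := by
    rw [← Finset.sum_filter_add_sum_filter_not (Finset.Ico 1 n) (fun j => 2 * j < n)]
    have hpartA : ∑ j ∈ (Finset.Ico 1 n).filter (fun j => 2 * j < n),
        k * ((((n - j : ℕ) : ℝ) * k) ^ (ν - 1)
          * Real.exp (-(lam * (((n - j : ℕ) : ℝ) * k))) * ((j : ℝ) * k) ^ (μ - 1))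
        ≤ (1 / μ + 1) * (2 ^ (1 - ν) * Hν * ((n : ℝ) * k) ^ (μ - 1) + T ^ (ν - 1) * Hμ) := by
      set W : ℝ := (((n : ℝ) * k / 2) ^ (ν - 1) + T ^ (ν - 1))
        * Real.exp (-(lam / 2 * ((n : ℝ) * k))) with hW_def
      have hW0 : (0:ℝ) ≤ W := by rw [hW_def]; positivity
      have hterm : ∀ j ∈ (Finset.Ico 1 n).filter (fun j => 2 * j < n),
          k * ((((n - j : ℕ) : ℝ) * k) ^ (ν - 1)
            * Real.exp (-(lam * (((n - j : ℕ) : ℝ) * k))) * ((j : ℝ) * k) ^ (μ - 1))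
          ≤ W * (k * ((j : ℝ) * k) ^ (μ - 1)) := by
        intro j hj
        simp only [Finset.mem_filter, Finset.mem_Ico] at hj
        have hj1 : 1 ≤ j := hj.1.1
        have hjn : j < n := hj.1.2
        have h2j : 2 * j < n := hj.2
        have hcast : ((n : ℝ)) ≤ 2 * ((n - j : ℕ) : ℝ) := by
          have : n ≤ 2 * (n - j) := by omega
          exact_mod_cast this
        have hhalf : (n : ℝ) * k / 2 ≤ ((n - j : ℕ) : ℝ) * k := by nlinarith
        have hnjT : ((n - j : ℕ) : ℝ) * k ≤ T := by
          rw [← hNk]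
          have : ((n - j : ℕ) : ℝ) ≤ (N : ℝ) := by
            have : n - j ≤ N := le_trans (Nat.sub_le n j) hnN
            exact_mod_cast this
          nlinarith
        have h1 : (((n - j : ℕ) : ℝ) * k) ^ (ν - 1)
            ≤ ((n : ℝ) * k / 2) ^ (ν - 1) + T ^ (ν - 1) := by
          rcases le_or_gt ν 1 with hcase | hcase
          · have h := Real.rpow_le_rpow_of_nonpos (x := (n : ℝ) * k / 2)
              (y := ((n - j : ℕ) : ℝ) * k) (z := ν - 1) (by positivity) hhalf (by linarith)
            have hT' : (0:ℝ) ≤ T ^ (ν - 1) := Real.rpow_nonneg hT.le _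
            linarith
          · have h := Real.rpow_le_rpow (x := ((n - j : ℕ) : ℝ) * k) (y := T) (z := ν - 1)
              (by positivity) hnjT (by linarith)
            have h' : (0:ℝ) ≤ ((n : ℝ) * k / 2) ^ (ν - 1) :=
              Real.rpow_nonneg (by positivity) _
            linarith
        have h2 : Real.exp (-(lam * (((n - j : ℕ) : ℝ) * k)))
            ≤ Real.exp (-(lam / 2 * ((n : ℝ) * k))) := by
          rw [Real.exp_le_exp]
          nlinarith
        have h3 : (((n - j : ℕ) : ℝ) * k) ^ (ν - 1)
              * Real.exp (-(lam * (((n - j : ℕ) : ℝ) * k))) ≤ W := by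
          rw [hW_def]
          exact mul_le_mul h1 h2 (Real.exp_pos _).le (by positivity)
        calc k * ((((n - j : ℕ) : ℝ) * k) ^ (ν - 1)
              * Real.exp (-(lam * (((n - j : ℕ) : ℝ) * k))) * ((j : ℝ) * k) ^ (μ - 1))
            = ((((n - j : ℕ) : ℝ) * k) ^ (ν - 1)
              * Real.exp (-(lam * (((n - j : ℕ) : ℝ) * k)))) * (k * ((j : ℝ) * k) ^ (μ - 1)) := by
              ring
          _ ≤ W * (k * ((j : ℝ) * k) ^ (μ - 1)) :=
              mul_le_mul_of_nonneg_right h3 (by positivity)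
      have hsum1 : ∑ j ∈ (Finset.Ico 1 n).filter (fun j => 2 * j < n),
          k * ((((n - j : ℕ) : ℝ) * k) ^ (ν - 1)
            * Real.exp (-(lam * (((n - j : ℕ) : ℝ) * k))) * ((j : ℝ) * k) ^ (μ - 1))
          ≤ W * ∑ j ∈ (Finset.Ico 1 n).filter (fun j => 2 * j < n),
              k * ((j : ℝ) * k) ^ (μ - 1) := by
        rw [Finset.mul_sum]
        exact Finset.sum_le_sum hterm
      have hsum2 : ∑ j ∈ (Finset.Ico 1 n).filter (fun j => 2 * j < n),
          k * ((j : ℝ) * k) ^ (μ - 1) ≤ (1 / μ + 1) * ((n : ℝ) * k) ^ μ := by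
        calc ∑ j ∈ (Finset.Ico 1 n).filter (fun j => 2 * j < n), k * ((j : ℝ) * k) ^ (μ - 1)
            ≤ ∑ j ∈ Finset.Icc 1 n, k * ((j : ℝ) * k) ^ (μ - 1) := by
              refine Finset.sum_le_sum_of_subset_of_nonneg ?_ (fun j _ _ => by positivity)
              intro j hj
              simp only [Finset.mem_filter, Finset.mem_Ico] at hj
              exact Finset.mem_Icc.2 ⟨hj.1.1, hj.1.2.le⟩
          _ ≤ (1 / μ + 1) * ((n : ℝ) * k) ^ μ := sum_k_rpow_le hμ hk n
      have halg : W * ((1 / μ + 1) * ((n : ℝ) * k) ^ μ)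
          ≤ (1 / μ + 1) * (2 ^ (1 - ν) * Hν * ((n : ℝ) * k) ^ (μ - 1) + T ^ (ν - 1) * Hμ) := by
        have he1 : ((n : ℝ) * k / 2) ^ (ν - 1) * ((n : ℝ) * k) ^ μ
            * Real.exp (-(lam / 2 * ((n : ℝ) * k)))
            ≤ 2 ^ (1 - ν) * Hν * ((n : ℝ) * k) ^ (μ - 1) := by
          have hd : ((n : ℝ) * k / 2) ^ (ν - 1)
              = 2 ^ (1 - ν) * ((n : ℝ) * k) ^ (ν - 1) := by
            rw [Real.div_rpow htn.le (by norm_num : (0:ℝ) ≤ 2), div_eq_mul_inv,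
              ← Real.rpow_neg (by norm_num : (0:ℝ) ≤ 2)]
            rw [show -(ν - 1) = 1 - ν by ring]
            ring
          have hsplitpow : ((n : ℝ) * k) ^ (ν - 1) * ((n : ℝ) * k) ^ μ
              = ((n : ℝ) * k) ^ (μ - 1) * ((n : ℝ) * k) ^ ν := by
            rw [← Real.rpow_add htn, ← Real.rpow_add htn]
            ring_nf
          have hx : ((n : ℝ) * k) ^ ν * Real.exp (-(lam / 2 * ((n : ℝ) * k))) ≤ Hν := by
            have h := rpow_mul_exp_le (p := ν) (x := (n : ℝ) * k) (lam := lam / 2)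
              (δ := δ) (T := T) hν htn.le htnT hδ (by linarith)
            refine h.trans ?_
            rw [hHν_def]
            have hee : Real.exp (-(lam / 2 * δ)) ≤ Real.exp (-(lam / 4 * δ)) := by
              rw [Real.exp_le_exp]; nlinarith
            have := mul_le_mul_of_nonneg_left hee (Real.rpow_nonneg hT.le ν)
            linarith
          calc ((n : ℝ) * k / 2) ^ (ν - 1) * ((n : ℝ) * k) ^ μ
                * Real.exp (-(lam / 2 * ((n : ℝ) * k)))
              = 2 ^ (1 - ν) * (((n : ℝ) * k) ^ (μ - 1)
                * (((n : ℝ) * k) ^ ν * Real.exp (-(lam / 2 * ((n : ℝ) * k))))) := by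
                rw [hd]
                calc 2 ^ (1 - ν) * ((n : ℝ) * k) ^ (ν - 1) * ((n : ℝ) * k) ^ μ
                    * Real.exp (-(lam / 2 * ((n : ℝ) * k)))
                    = 2 ^ (1 - ν) * (((n : ℝ) * k) ^ (ν - 1) * ((n : ℝ) * k) ^ μ)
                      * Real.exp (-(lam / 2 * ((n : ℝ) * k))) := by ring
                  _ = 2 ^ (1 - ν) * (((n : ℝ) * k) ^ (μ - 1) * ((n : ℝ) * k) ^ ν)
                      * Real.exp (-(lam / 2 * ((n : ℝ) * k))) := by rw [hsplitpow]
                  _ = 2 ^ (1 - ν) * (((n : ℝ) * k) ^ (μ - 1)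
                      * (((n : ℝ) * k) ^ ν * Real.exp (-(lam / 2 * ((n : ℝ) * k))))) := by ring
            _ ≤ 2 ^ (1 - ν) * (((n : ℝ) * k) ^ (μ - 1) * Hν) := by
                refine mul_le_mul_of_nonneg_left ?_ (by positivity)
                exact mul_le_mul_of_nonneg_left hx hQ0
            _ = 2 ^ (1 - ν) * Hν * ((n : ℝ) * k) ^ (μ - 1) := by ring
        have he2 : T ^ (ν - 1) * ((n : ℝ) * k) ^ μ * Real.exp (-(lam / 2 * ((n : ℝ) * k)))
            ≤ T ^ (ν - 1) * Hμ := by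
          have hx : ((n : ℝ) * k) ^ μ * Real.exp (-(lam / 2 * ((n : ℝ) * k))) ≤ Hμ := by
            have h := rpow_mul_exp_le (p := μ) (x := (n : ℝ) * k) (lam := lam / 2)
              (δ := δ) (T := T) hμ htn.le htnT hδ (by linarith)
            refine h.trans ?_
            rw [hHμ_def]
            have hee : Real.exp (-(lam / 2 * δ)) ≤ Real.exp (-(lam / 4 * δ)) := by
              rw [Real.exp_le_exp]; nlinarith
            have := mul_le_mul_of_nonneg_left hee (Real.rpow_nonneg hT.le μ)
            linarith
          calc T ^ (ν - 1) * ((n : ℝ) * k) ^ μ * Real.exp (-(lam / 2 * ((n : ℝ) * k)))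
              = T ^ (ν - 1) * (((n : ℝ) * k) ^ μ * Real.exp (-(lam / 2 * ((n : ℝ) * k)))) := by
                ring
            _ ≤ T ^ (ν - 1) * Hμ :=
                mul_le_mul_of_nonneg_left hx (Real.rpow_nonneg hT.le _)
        have hexpand : W * ((1 / μ + 1) * ((n : ℝ) * k) ^ μ)
            = (1 / μ + 1) * (((n : ℝ) * k / 2) ^ (ν - 1) * ((n : ℝ) * k) ^ μ
              * Real.exp (-(lam / 2 * ((n : ℝ) * k)))
              + T ^ (ν - 1) * ((n : ℝ) * k) ^ μ * Real.exp (-(lam / 2 * ((n : ℝ) * k)))) := by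
          rw [hW_def]; ring
        rw [hexpand]
        have hc : (0:ℝ) ≤ 1 / μ + 1 := by positivity
        exact mul_le_mul_of_nonneg_left (add_le_add he1 he2) hc
      calc ∑ j ∈ (Finset.Ico 1 n).filter (fun j => 2 * j < n),
          k * ((((n - j : ℕ) : ℝ) * k) ^ (ν - 1)
            * Real.exp (-(lam * (((n - j : ℕ) : ℝ) * k))) * ((j : ℝ) * k) ^ (μ - 1))
          ≤ W * ∑ j ∈ (Finset.Ico 1 n).filter (fun j => 2 * j < n),
              k * ((j : ℝ) * k) ^ (μ - 1) := hsum1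
        _ ≤ W * ((1 / μ + 1) * ((n : ℝ) * k) ^ μ) := mul_le_mul_of_nonneg_left hsum2 hW0
        _ ≤ (1 / μ + 1) * (2 ^ (1 - ν) * Hν * ((n : ℝ) * k) ^ (μ - 1) + T ^ (ν - 1) * Hμ) :=
            halg
    have hpartB : ∑ j ∈ (Finset.Ico 1 n).filter (fun j => ¬ (2 * j < n)),
        k * ((((n - j : ℕ) : ℝ) * k) ^ (ν - 1)
          * Real.exp (-(lam * (((n - j : ℕ) : ℝ) * k))) * ((j : ℝ) * k) ^ (μ - 1))
        ≤ (2 ^ (1 - μ) + T ^ (μ - 1)) * (1 + ((n : ℝ) * k) ^ (μ - 1)) * ((1 / ν + 1) * Hν) := by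
      set Cμ : ℝ := (2 ^ (1 - μ) + T ^ (μ - 1)) * (1 + ((n : ℝ) * k) ^ (μ - 1)) with hCμ_def
      have hCμ0 : (0:ℝ) ≤ Cμ := by rw [hCμ_def]; positivity
      have hterm : ∀ j ∈ (Finset.Ico 1 n).filter (fun j => ¬ (2 * j < n)),
          k * ((((n - j : ℕ) : ℝ) * k) ^ (ν - 1)
            * Real.exp (-(lam * (((n - j : ℕ) : ℝ) * k))) * ((j : ℝ) * k) ^ (μ - 1))
          ≤ Cμ * (k * ((((n - j : ℕ) : ℝ) * k) ^ (ν - 1)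
            * Real.exp (-(lam * (((n - j : ℕ) : ℝ) * k))))) := by
        intro j hj
        simp only [Finset.mem_filter, Finset.mem_Ico, not_lt] at hj
        have hj1 : 1 ≤ j := hj.1.1
        have hjn : j < n := hj.1.2
        have hn2j : n ≤ 2 * j := hj.2
        have hcast : ((n : ℝ)) ≤ 2 * (j : ℝ) := by exact_mod_cast hn2j
        have hhalf : (n : ℝ) * k / 2 ≤ (j : ℝ) * k := by nlinarith
        have hjT : (j : ℝ) * k ≤ T := by
          rw [← hNk]
          have : (j : ℝ) ≤ (N : ℝ) := by
            have : j ≤ N := le_trans hjn.le hnN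
            exact_mod_cast this
          nlinarith
        have hB : ((j : ℝ) * k) ^ (μ - 1) ≤ Cμ := by
          rw [hCμ_def]
          have hexp : (2 ^ (1 - μ) + T ^ (μ - 1)) * (1 + ((n : ℝ) * k) ^ (μ - 1))
              = 2 ^ (1 - μ) + 2 ^ (1 - μ) * ((n : ℝ) * k) ^ (μ - 1) + T ^ (μ - 1)
                + T ^ (μ - 1) * ((n : ℝ) * k) ^ (μ - 1) := by ring
          rw [hexp]
          have hnn1 : (0:ℝ) ≤ (2:ℝ) ^ (1 - μ) := Real.rpow_nonneg (by norm_num) _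
          have hnn2 : (0:ℝ) ≤ T ^ (μ - 1) := Real.rpow_nonneg hT.le _
          have hnn3 : (0:ℝ) ≤ T ^ (μ - 1) * ((n : ℝ) * k) ^ (μ - 1) := by positivity
          rcases le_or_gt μ 1 with hcase | hcase
          · have h := Real.rpow_le_rpow_of_nonpos (x := (n : ℝ) * k / 2)
              (y := (j : ℝ) * k) (z := μ - 1) (by positivity) hhalf (by linarith)
            have hd : ((n : ℝ) * k / 2) ^ (μ - 1)
                = 2 ^ (1 - μ) * ((n : ℝ) * k) ^ (μ - 1) := by
              rw [Real.div_rpow htn.le (by norm_num : (0:ℝ) ≤ 2), div_eq_mul_inv,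
                ← Real.rpow_neg (by norm_num : (0:ℝ) ≤ 2)]
              rw [show -(μ - 1) = 1 - μ by ring]
              ring
            rw [hd] at h
            linarith
          · have h := Real.rpow_le_rpow (x := (j : ℝ) * k) (y := T) (z := μ - 1)
              (by positivity) hjT (by linarith)
            have hnn4 : (0:ℝ) ≤ 2 ^ (1 - μ) * ((n : ℝ) * k) ^ (μ - 1) := by positivity
            linarith
        calc k * ((((n - j : ℕ) : ℝ) * k) ^ (ν - 1)
              * Real.exp (-(lam * (((n - j : ℕ) : ℝ) * k))) * ((j : ℝ) * k) ^ (μ - 1))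
            = ((j : ℝ) * k) ^ (μ - 1) * (k * ((((n - j : ℕ) : ℝ) * k) ^ (ν - 1)
              * Real.exp (-(lam * (((n - j : ℕ) : ℝ) * k))))) := by ring
          _ ≤ Cμ * (k * ((((n - j : ℕ) : ℝ) * k) ^ (ν - 1)
              * Real.exp (-(lam * (((n - j : ℕ) : ℝ) * k))))) :=
              mul_le_mul_of_nonneg_right hB (by positivity)
      calc ∑ j ∈ (Finset.Ico 1 n).filter (fun j => ¬ (2 * j < n)),
          k * ((((n - j : ℕ) : ℝ) * k) ^ (ν - 1)
            * Real.exp (-(lam * (((n - j : ℕ) : ℝ) * k))) * ((j : ℝ) * k) ^ (μ - 1))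
          ≤ ∑ j ∈ (Finset.Ico 1 n).filter (fun j => ¬ (2 * j < n)),
            Cμ * (k * ((((n - j : ℕ) : ℝ) * k) ^ (ν - 1)
              * Real.exp (-(lam * (((n - j : ℕ) : ℝ) * k))))) := Finset.sum_le_sum hterm
        _ ≤ ∑ j ∈ Finset.Ico 1 n,
            Cμ * (k * ((((n - j : ℕ) : ℝ) * k) ^ (ν - 1)
              * Real.exp (-(lam * (((n - j : ℕ) : ℝ) * k))))) := by
            refine Finset.sum_le_sum_of_subset_of_nonneg (Finset.filter_subset _ _)
              (fun j _ _ => ?_)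
            have : (0:ℝ) ≤ k * ((((n - j : ℕ) : ℝ) * k) ^ (ν - 1)
              * Real.exp (-(lam * (((n - j : ℕ) : ℝ) * k)))) := by positivity
            exact mul_nonneg hCμ0 this
        _ = Cμ * ∑ j ∈ Finset.Ico 1 n,
            k * ((((n - j : ℕ) : ℝ) * k) ^ (ν - 1)
              * Real.exp (-(lam * (((n - j : ℕ) : ℝ) * k)))) := by
            rw [Finset.mul_sum]
        _ ≤ Cμ * ((1 / ν + 1) * Hν) := mul_le_mul_of_nonneg_left hS1 hCμ0
    linarith [hpartA, hpartB]
  have hfinal1 : (0:ℝ) ≤ (1 / ν + 1) * Hν * ((n : ℝ) * k) ^ (μ - 1) := by positivity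
  have hfinal2 : (0:ℝ) ≤ (1 / μ + 1) * (2 ^ (1 - ν) * Hν) := by positivity
  have hfinal3 : (0:ℝ) ≤ (1 / μ + 1) * (T ^ (ν - 1) * Hμ) * ((n : ℝ) * k) ^ (μ - 1) := by
    positivity
  linarith [hS1, hS2, hfinal1, hfinal2, hfinal3]

set_option maxHeartbeats 2000000 in
/-- Discrete Gronwall lemma with weakly singular kernel. -/
theorem discrete_gronwall_singular
    (T μ ν M₁ : ℝ) (hT : 0 < T) (hμ : 0 < μ) (hν : 0 < ν) (hM₁ : 0 ≤ M₁) :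
    ∃ M₂ : ℝ, ∀ (N : ℕ), 0 < N → ∀ (M₀ : ℝ), 0 ≤ M₀ → ∀ (φ : ℕ → ℝ),
      (∀ n, 1 ≤ n → n ≤ N → 0 ≤ φ n) →
      (∀ n, 1 ≤ n → n ≤ N →
        φ n ≤ M₀ * (1 + ((n : ℝ) * (T / N)) ^ (-1 + μ))
              + M₁ * (T / N) *
                ∑ j ∈ Finset.Ico 1 n, (((n - j : ℕ) : ℝ) * (T / N)) ^ (-1 + ν) * φ j) →
      ∀ n, 1 ≤ n → n ≤ N → φ n ≤ M₀ * M₂ * (1 + ((n : ℝ) * (T / N)) ^ (-1 + μ)) := by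
  have hμ' : (-1 : ℝ) + μ = μ - 1 := by ring
  have hν' : (-1 : ℝ) + ν = ν - 1 := by ring
  obtain ⟨C1, hC1_def⟩ : ∃ x : ℝ,
      x = (1 + 2 ^ (1 - μ) + T ^ (μ - 1)) * (1 / ν + 1) + (1 / μ + 1) * 2 ^ (1 - ν) := ⟨_, rfl⟩
  obtain ⟨C2, hC2_def⟩ : ∃ x : ℝ, x = (1 / μ + 1) * T ^ (ν - 1) := ⟨_, rfl⟩
  have hC1 : (0:ℝ) < C1 := by rw [hC1_def]; positivity
  have hC2 : (0:ℝ) < C2 := by rw [hC2_def]; positivity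
  have hMC1 : (0:ℝ) ≤ M₁ * C1 := mul_nonneg hM₁ hC1.le
  have hMC2 : (0:ℝ) ≤ M₁ * C2 := mul_nonneg hM₁ hC2.le
  obtain ⟨a, ha_def⟩ : ∃ x : ℝ, x = (1/4) / (M₁ * C1 + M₁ * C2 + 1) := ⟨_, rfl⟩
  have ha : 0 < a := by
    rw [ha_def]
    apply div_pos (by norm_num)
    linarith
  obtain ⟨δ, hδ_def⟩ : ∃ x : ℝ, x = min (a ^ (ν⁻¹)) (a ^ (μ⁻¹)) := ⟨_, rfl⟩
  have hδ : 0 < δ := by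
    rw [hδ_def]
    exact lt_min (Real.rpow_pos_of_pos ha _) (Real.rpow_pos_of_pos ha _)
  have hmin1 : δ ≤ a ^ (ν⁻¹) := by
    rw [hδ_def]
    exact min_le_left _ _
  have hmin2 : δ ≤ a ^ (μ⁻¹) := by
    rw [hδ_def]
    exact min_le_right _ _
  have hδν : δ ^ ν ≤ a := by
    have h1 : δ ^ ν ≤ (a ^ (ν⁻¹)) ^ ν := Real.rpow_le_rpow hδ.le hmin1 hν.le
    have h2 : (a ^ (ν⁻¹)) ^ ν = a := by
      rw [← Real.rpow_mul ha.le, inv_mul_cancel₀ hν.ne', Real.rpow_one]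
    linarith
  have hδμ : δ ^ μ ≤ a := by
    have h1 : δ ^ μ ≤ (a ^ (μ⁻¹)) ^ μ := Real.rpow_le_rpow hδ.le hmin2 hμ.le
    have h2 : (a ^ (μ⁻¹)) ^ μ = a := by
      rw [← Real.rpow_mul ha.le, inv_mul_cancel₀ hμ.ne', Real.rpow_one]
    linarith
  have hTν : (0:ℝ) < T ^ ν := Real.rpow_pos_of_pos hT _
  have hTμ : (0:ℝ) < T ^ μ := Real.rpow_pos_of_pos hT _
  have hMC1T : (0:ℝ) ≤ M₁ * C1 * T ^ ν := mul_nonneg hMC1 hTν.le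
  have hMC2T : (0:ℝ) ≤ M₁ * C2 * T ^ μ := mul_nonneg hMC2 hTμ.le
  obtain ⟨b, hb_def⟩ : ∃ x : ℝ,
      x = (1/4) / (M₁ * C1 * T ^ ν + M₁ * C2 * T ^ μ + 1) := ⟨_, rfl⟩
  have hDpos : (0:ℝ) < M₁ * C1 * T ^ ν + M₁ * C2 * T ^ μ + 1 := by linarith
  have hb : 0 < b := by
    rw [hb_def]
    exact div_pos (by norm_num) hDpos
  have hb1 : b ≤ 1 := by
    rw [hb_def, div_le_iff₀ hDpos]
    linarith
  obtain ⟨lam, hlam_def⟩ : ∃ x : ℝ, x = (4 / δ) * Real.log (1 / b) := ⟨_, rfl⟩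
  have hlam : 0 ≤ lam := by
    rw [hlam_def]
    apply mul_nonneg (by positivity)
    apply Real.log_nonneg
    rw [le_div_iff₀ hb]
    linarith
  have hexpb : Real.exp (-(lam / 4 * δ)) = b := by
    have h1 : lam / 4 * δ = Real.log (1 / b) := by
      rw [hlam_def]
      field_simp
    rw [h1, one_div, Real.log_inv, neg_neg, Real.exp_log hb]
  have hkey : M₁ * (C1 * (δ ^ ν + T ^ ν * Real.exp (-(lam / 4 * δ)))
      + C2 * (δ ^ μ + T ^ μ * Real.exp (-(lam / 4 * δ)))) ≤ 1/2 := by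
    rw [hexpb]
    have hha : a * (M₁ * C1 + M₁ * C2 + 1) = 1/4 := by
      rw [ha_def]
      field_simp
    have hhb : b * (M₁ * C1 * T ^ ν + M₁ * C2 * T ^ μ + 1) = 1/4 := by
      rw [hb_def]
      field_simp
    have e1 : M₁ * C1 * δ ^ ν ≤ M₁ * C1 * a := mul_le_mul_of_nonneg_left hδν hMC1
    have e2 : M₁ * C2 * δ ^ μ ≤ M₁ * C2 * a := mul_le_mul_of_nonneg_left hδμ hMC2
    nlinarith [mul_nonneg hMC1 ha.le, mul_nonneg hMC2 ha.le,
      mul_nonneg hMC1T hb.le, mul_nonneg hMC2T hb.le]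
  refine ⟨2 * Real.exp (lam * T), ?_⟩
  intro N hN M₀ hM₀ φ hφ0 hφ
  simp only [hμ', hν'] at hφ ⊢
  have hNpos : (0:ℝ) < (N:ℝ) := by exact_mod_cast hN
  obtain ⟨k, hk_def⟩ : ∃ x : ℝ, x = T / (N:ℝ) := ⟨_, rfl⟩
  rw [show T / (N:ℝ) = k from hk_def.symm] at hφ ⊢
  have hk : 0 < k := by rw [hk_def]; positivity
  have hNk : (N:ℝ) * k = T := by
    rw [hk_def]
    field_simp
  have main : ∀ n : ℕ, n ≤ N → 1 ≤ n →
      φ n ≤ M₀ * (2 * Real.exp (lam * ((n:ℝ) * k))) * (1 + ((n:ℝ) * k) ^ (μ - 1)) := by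
    intro n
    induction n using Nat.strong_induction_on with
    | _ n ih =>
      intro hnN hn1
      have hrec := hφ n hn1 hnN
      have htn : (0:ℝ) < (n:ℝ) * k := by
        have : (0:ℝ) < (n:ℝ) := by exact_mod_cast hn1
        positivity
      have htnT : (n:ℝ) * k ≤ T := by
        rw [← hNk]
        have h : (n:ℝ) ≤ (N:ℝ) := by exact_mod_cast hnN
        exact mul_le_mul_of_nonneg_right h hk.le
      have hQ0 : (0:ℝ) ≤ ((n:ℝ) * k) ^ (μ - 1) := Real.rpow_nonneg htn.le _
      have hE1 : (1:ℝ) ≤ Real.exp (lam * ((n:ℝ) * k)) := by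
        rw [← Real.exp_zero, Real.exp_le_exp]
        positivity
      have hsum : ∑ j ∈ Finset.Ico 1 n, (((n - j : ℕ) : ℝ) * k) ^ (ν - 1) * φ j
          ≤ ∑ j ∈ Finset.Ico 1 n, (((n - j : ℕ) : ℝ) * k) ^ (ν - 1)
            * (M₀ * (2 * Real.exp (lam * ((j:ℝ) * k))) * (1 + ((j:ℝ) * k) ^ (μ - 1))) := by
        refine Finset.sum_le_sum fun j hj => ?_
        simp only [Finset.mem_Ico] at hj
        have hφj := ih j hj.2 (le_trans hj.2.le hnN) hj.1
        have hc : (0:ℝ) ≤ (((n - j : ℕ) : ℝ) * k) ^ (ν - 1) :=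
          Real.rpow_nonneg (by positivity) _
        exact mul_le_mul_of_nonneg_left hφj hc
      have hfact : ∑ j ∈ Finset.Ico 1 n, (((n - j : ℕ) : ℝ) * k) ^ (ν - 1)
            * (M₀ * (2 * Real.exp (lam * ((j:ℝ) * k))) * (1 + ((j:ℝ) * k) ^ (μ - 1)))
          = (M₀ * (2 * Real.exp (lam * ((n:ℝ) * k)))) * ∑ j ∈ Finset.Ico 1 n,
              ((((n - j : ℕ) : ℝ) * k) ^ (ν - 1)
                * Real.exp (-(lam * (((n - j : ℕ) : ℝ) * k)))
                * (1 + ((j:ℝ) * k) ^ (μ - 1))) := by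
        rw [Finset.mul_sum]
        refine Finset.sum_congr rfl fun j hj => ?_
        simp only [Finset.mem_Ico] at hj
        have hcast : ((n - j : ℕ) : ℝ) = (n:ℝ) - (j:ℝ) := by
          rw [Nat.cast_sub hj.2.le]
        have hexp : Real.exp (lam * ((j:ℝ) * k))
            = Real.exp (lam * ((n:ℝ) * k)) * Real.exp (-(lam * (((n - j : ℕ) : ℝ) * k))) := by
          rw [← Real.exp_add, hcast]
          ring_nf
        rw [hexp]
        ring
      have hker := kernel_bound T μ ν k lam δ hT hμ hν hk hδ hlam hn1 hnN hNk
      rw [← hC1_def, ← hC2_def] at hker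
      have hkS : M₁ * (k * ∑ j ∈ Finset.Ico 1 n,
            ((((n - j : ℕ) : ℝ) * k) ^ (ν - 1)
              * Real.exp (-(lam * (((n - j : ℕ) : ℝ) * k)))
              * (1 + ((j:ℝ) * k) ^ (μ - 1))))
          ≤ (1/2) * (1 + ((n:ℝ) * k) ^ (μ - 1)) := by
        have h1 : k * ∑ j ∈ Finset.Ico 1 n,
              ((((n - j : ℕ) : ℝ) * k) ^ (ν - 1)
                * Real.exp (-(lam * (((n - j : ℕ) : ℝ) * k)))
                * (1 + ((j:ℝ) * k) ^ (μ - 1)))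
            = ∑ j ∈ Finset.Ico 1 n, k * ((((n - j : ℕ) : ℝ) * k) ^ (ν - 1)
                * Real.exp (-(lam * (((n - j : ℕ) : ℝ) * k)))
                * (1 + ((j:ℝ) * k) ^ (μ - 1))) := Finset.mul_sum _ _ _
        calc M₁ * (k * ∑ j ∈ Finset.Ico 1 n,
              ((((n - j : ℕ) : ℝ) * k) ^ (ν - 1)
                * Real.exp (-(lam * (((n - j : ℕ) : ℝ) * k)))
                * (1 + ((j:ℝ) * k) ^ (μ - 1))))
            ≤ M₁ * ((C1 * (δ ^ ν + T ^ ν * Real.exp (-(lam / 4 * δ)))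
                + C2 * (δ ^ μ + T ^ μ * Real.exp (-(lam / 4 * δ))))
                * (1 + ((n:ℝ) * k) ^ (μ - 1))) := by
              refine mul_le_mul_of_nonneg_left ?_ hM₁
              rw [h1]
              exact hker
          _ = (M₁ * (C1 * (δ ^ ν + T ^ ν * Real.exp (-(lam / 4 * δ)))
                + C2 * (δ ^ μ + T ^ μ * Real.exp (-(lam / 4 * δ)))))
              * (1 + ((n:ℝ) * k) ^ (μ - 1)) := by ring
          _ ≤ (1/2) * (1 + ((n:ℝ) * k) ^ (μ - 1)) := by
              refine mul_le_mul_of_nonneg_right hkey ?_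
              linarith
      calc φ n ≤ M₀ * (1 + ((n:ℝ) * k) ^ (μ - 1))
            + M₁ * k * ∑ j ∈ Finset.Ico 1 n, (((n - j : ℕ) : ℝ) * k) ^ (ν - 1) * φ j := hrec
        _ ≤ M₀ * (1 + ((n:ℝ) * k) ^ (μ - 1))
            + M₁ * k * ∑ j ∈ Finset.Ico 1 n, (((n - j : ℕ) : ℝ) * k) ^ (ν - 1)
              * (M₀ * (2 * Real.exp (lam * ((j:ℝ) * k))) * (1 + ((j:ℝ) * k) ^ (μ - 1))) := by
            have : (0:ℝ) ≤ M₁ * k := mul_nonneg hM₁ hk.le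
            nlinarith [mul_le_mul_of_nonneg_left hsum this]
        _ = M₀ * (1 + ((n:ℝ) * k) ^ (μ - 1))
            + (M₀ * (2 * Real.exp (lam * ((n:ℝ) * k)))) * (M₁ * (k * ∑ j ∈ Finset.Ico 1 n,
              ((((n - j : ℕ) : ℝ) * k) ^ (ν - 1)
                * Real.exp (-(lam * (((n - j : ℕ) : ℝ) * k)))
                * (1 + ((j:ℝ) * k) ^ (μ - 1))))) := by
            rw [hfact]
            ring
        _ ≤ M₀ * (1 + ((n:ℝ) * k) ^ (μ - 1))
            + (M₀ * (2 * Real.exp (lam * ((n:ℝ) * k))))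
              * ((1/2) * (1 + ((n:ℝ) * k) ^ (μ - 1))) := by
            refine add_le_add (le_refl _) (mul_le_mul_of_nonneg_left hkS ?_)
            positivity
        _ = M₀ * (1 + ((n:ℝ) * k) ^ (μ - 1))
            + M₀ * Real.exp (lam * ((n:ℝ) * k)) * (1 + ((n:ℝ) * k) ^ (μ - 1)) := by ring
        _ ≤ M₀ * Real.exp (lam * ((n:ℝ) * k)) * (1 + ((n:ℝ) * k) ^ (μ - 1))
            + M₀ * Real.exp (lam * ((n:ℝ) * k)) * (1 + ((n:ℝ) * k) ^ (μ - 1)) := by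
            have hq1 : (0:ℝ) ≤ 1 + ((n:ℝ) * k) ^ (μ - 1) := by linarith
            have h2 := mul_le_mul_of_nonneg_left hE1 (mul_nonneg hM₀ hq1)
            nlinarith [h2]
        _ = M₀ * (2 * Real.exp (lam * ((n:ℝ) * k))) * (1 + ((n:ℝ) * k) ^ (μ - 1)) := by ring
  intro n hn1 hnN
  have h := main n hnN hn1
  refine h.trans ?_
  have htn : (0:ℝ) ≤ (n:ℝ) * k := by positivity
  have htnT : (n:ℝ) * k ≤ T := by
    rw [← hNk]
    have h : (n:ℝ) ≤ (N:ℝ) := by exact_mod_cast hnN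
    exact mul_le_mul_of_nonneg_right h hk.le
  have hE : Real.exp (lam * ((n:ℝ) * k)) ≤ Real.exp (lam * T) := by
    rw [Real.exp_le_exp]
    exact mul_le_mul_of_nonneg_left htnT hlam
  have hQ0 : (0:ℝ) ≤ (1 + ((n:ℝ) * k) ^ (μ - 1)) := by positivity
  have hE0 : (0:ℝ) ≤ Real.exp (lam * ((n:ℝ) * k)) := (Real.exp_pos _).le
  nlinarith [mul_le_mul_of_nonneg_left hE hM₀]
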